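/- arXiv:1605.06493 — 2 statements merged into one kernel-verified Lean document; each statement's English description precedes it below -/
import Mathlib

section
/- Let M ∈ SL₂(ℤ) be hyperbolic with λ_M > 1, and let |y|_M := ‖y⁺‖ − ‖y⁻‖ for the decomposition along the eigenspaces of M*. Let ε > 0, κ ≥ 0, and let R : ℝ² → ℝ_{≥0} satisfy R(z) ≤ κ‖z‖ whenever ‖z‖ < ε. Then there exists c_M > 0 such that for all κ < c_M there exist constants c₁ > c₂ > 0 such that for all n₁, n₂ ∈ ℤ² there exists y = y_{n₁,n₂} ∈ ℝ² with ‖y‖ < ε (independent of R) satisfying −c₁(|n₁|_M − |n₂|_M) − (n₂ᵀM − n₁ᵀ)y + ‖n₂‖ R(y) ≤ −c₂(‖n₁‖ + ‖n₂‖). -/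
open Matrix

noncomputable def e2 (y : Fin 2 → ℝ) : ℝ := Real.sqrt (∑ i, y i ^ 2)



lemma e2_eq_norm (y : Fin 2 → ℝ) :
    e2 y = ‖(WithLp.equiv 2 (Fin 2 → ℝ)).symm y‖ := by
  rw [EuclideanSpace.norm_eq]
  unfold e2
  congr 1
  refine Finset.sum_congr rfl fun i _ => ?_
  show y i ^ 2 = ‖y i‖ ^ 2
  rw [Real.norm_eq_abs, sq_abs]

lemma e2_nonneg (y : Fin 2 → ℝ) : 0 ≤ e2 y := Real.sqrt_nonneg _

lemma e2_add_le (x y : Fin 2 → ℝ) : e2 (x + y) ≤ e2 x + e2 y := by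
  rw [e2_eq_norm, e2_eq_norm, e2_eq_norm]
  have h : (WithLp.equiv 2 (Fin 2 → ℝ)).symm (x + y)
      = (WithLp.equiv 2 (Fin 2 → ℝ)).symm x + (WithLp.equiv 2 (Fin 2 → ℝ)).symm y := rfl
  rw [h]; exact norm_add_le _ _

lemma e2_sub_abs (x y : Fin 2 → ℝ) : |e2 x - e2 y| ≤ e2 (x - y) := by
  rw [e2_eq_norm, e2_eq_norm, e2_eq_norm]
  have h : (WithLp.equiv 2 (Fin 2 → ℝ)).symm (x - y)
      = (WithLp.equiv 2 (Fin 2 → ℝ)).symm x - (WithLp.equiv 2 (Fin 2 → ℝ)).symm y := rfl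
  rw [h]; exact abs_norm_sub_norm_le _ _

lemma e2_smul (c : ℝ) (y : Fin 2 → ℝ) : e2 (c • y) = |c| * e2 y := by
  rw [e2_eq_norm, e2_eq_norm]
  have h : (WithLp.equiv 2 (Fin 2 → ℝ)).symm (c • y)
      = c • (WithLp.equiv 2 (Fin 2 → ℝ)).symm y := rfl
  rw [h, norm_smul, Real.norm_eq_abs]

lemma e2_apply_abs_le (y : Fin 2 → ℝ) (i : Fin 2) : |y i| ≤ e2 y := by
  unfold e2
  rw [← Real.sqrt_sq_eq_abs]
  apply Real.sqrt_le_sqrt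
  exact Finset.single_le_sum (f := fun j => y j ^ 2) (fun j _ => sq_nonneg _) (Finset.mem_univ i)

lemma e2_sq (y : Fin 2 → ℝ) : e2 y ^ 2 = ∑ i, y i ^ 2 :=
  Real.sq_sqrt (by positivity)

lemma e2_zero : e2 (0 : Fin 2 → ℝ) = 0 := by simp [e2]

lemma e2_lin_bound (q : (Fin 2 → ℝ) →ₗ[ℝ] (Fin 2 → ℝ)) (y : Fin 2 → ℝ) :
    e2 (q y) ≤ (e2 (q (Pi.single 0 1)) + e2 (q (Pi.single 1 1)) + 1) * e2 y := by
  have hy : y = y 0 • (Pi.single 0 1 : Fin 2 → ℝ) + y 1 • (Pi.single 1 1 : Fin 2 → ℝ) := by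
    funext i; fin_cases i <;> simp
  have h1 : e2 (q y) = e2 (y 0 • q (Pi.single 0 1) + y 1 • q (Pi.single 1 1)) := by
    conv_lhs => rw [hy]
    rw [map_add, _root_.map_smul, _root_.map_smul]
  rw [h1]
  calc e2 (y 0 • q (Pi.single 0 1) + y 1 • q (Pi.single 1 1))
      ≤ e2 (y 0 • q (Pi.single 0 1)) + e2 (y 1 • q (Pi.single 1 1)) := e2_add_le _ _
    _ = |y 0| * e2 (q (Pi.single 0 1)) + |y 1| * e2 (q (Pi.single 1 1)) := by
        rw [e2_smul, e2_smul]
    _ ≤ e2 y * e2 (q (Pi.single 0 1)) + e2 y * e2 (q (Pi.single 1 1)) := by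
        gcongr <;> first | exact e2_nonneg _ | exact e2_apply_abs_le _ _
    _ ≤ (e2 (q (Pi.single 0 1)) + e2 (q (Pi.single 1 1)) + 1) * e2 y := by
        nlinarith [e2_nonneg y, e2_nonneg (q (Pi.single 0 1)), e2_nonneg (q (Pi.single 1 1))]



lemma numA (lam σ t c₂ a₁ a₂ W : ℝ)
    (hlam : 1 < lam) (hσ : 0 < σ)
    (hc₂0 : 0 ≤ c₂) (hc₂ : 8*(lam+1)*c₂ = σ*(lam-1))
    (ht0 : 0 ≤ t) (ht : 4*lam*t ≤ σ*(lam-1))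
    (ha₁ : 0 ≤ a₁) (ha₂ : 0 ≤ a₂)
    (hW : |lam*a₂ - a₁| ≤ W) :
    σ/2*(a₂-a₁) + c₂*(a₁+a₂) + t*a₂ ≤ σ*W := by
  have h1 : lam*a₂ - a₁ ≤ W := (abs_le.1 hW).2
  have h2 : a₁ - lam*a₂ ≤ W := by have := (abs_le.1 hW).1; linarith
  have hl1 : (0:ℝ) ≤ lam - 1 := by linarith
  have hK : 0 ≤ σ*(lam-1) - 4*t := by nlinarith [mul_nonneg ht0 hl1]
  have h8 : 8*c₂ ≤ σ := by nlinarith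
  have hc₂a : 8*(lam+1)*c₂*a₂ = σ*(lam-1)*a₂ := by linear_combination a₂ * hc₂
  have hσl : 0 ≤ σ*(lam-1) := by positivity
  rcases le_total a₁ (lam*a₂) with h | h
  · nlinarith [mul_nonneg (by linarith : (0:ℝ) ≤ lam*a₂ - a₁) (by linarith : (0:ℝ) ≤ 3*σ/2 - c₂),
      mul_nonneg ha₂ hK, mul_nonneg ha₂ hσl, mul_le_mul_of_nonneg_left h1 hσ.le,
      mul_nonneg ha₁ hK, mul_nonneg ha₁ hσl]
  · nlinarith [mul_nonneg (by linarith : (0:ℝ) ≤ a₁ - lam*a₂) (by linarith : (0:ℝ) ≤ 3*σ/2 - c₂),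
      mul_nonneg ha₂ hK, mul_nonneg ha₂ hσl, mul_le_mul_of_nonneg_left h2 hσ.le,
      mul_nonneg ha₁ hK, mul_nonneg ha₁ hσl]

lemma numB (lam σ t c₂ b₁ b₂ W : ℝ)
    (hlam : 1 < lam) (hσ : 0 < σ)
    (hc₂0 : 0 ≤ c₂) (hc₂ : 8*(lam+1)*c₂ = σ*(lam-1))
    (ht0 : 0 ≤ t) (ht : 4*lam*t ≤ σ*(lam-1))
    (hb₁ : 0 ≤ b₁) (hb₂ : 0 ≤ b₂)
    (hW : |lam⁻¹*b₂ - b₁| ≤ W) :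
    σ/2*(b₁-b₂) + c₂*(b₁+b₂) + t*b₂ ≤ σ*W := by
  have hlam0 : (0:ℝ) < lam := lt_trans one_pos hlam
  have hW' : |b₂ - lam*b₁| ≤ lam*W := by
    have he : b₂ - lam*b₁ = lam*(lam⁻¹*b₂ - b₁) := by field_simp
    rw [he, abs_mul, abs_of_pos hlam0]
    exact mul_le_mul_of_nonneg_left hW hlam0.le
  have h1 : b₂ - lam*b₁ ≤ lam*W := (abs_le.1 hW').2
  have h2 : lam*b₁ - b₂ ≤ lam*W := by have := (abs_le.1 hW').1; linarith
  have hW0 : 0 ≤ W := le_trans (abs_nonneg _) hW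
  have hl1 : (0:ℝ) ≤ lam - 1 := by linarith
  have hK : 0 ≤ σ*(lam-1) - 4*t := by nlinarith [mul_nonneg ht0 hl1]
  have h8 : 8*c₂ ≤ σ := by nlinarith
  have hσl : 0 ≤ σ*(lam-1) := by positivity
  rcases le_total b₂ (lam*b₁) with h | h
  · nlinarith [mul_nonneg (by linarith : (0:ℝ) ≤ lam*b₁ - b₂) (by linarith : (0:ℝ) ≤ σ/2 - c₂),
      mul_nonneg hb₁ hK, mul_nonneg hb₁ hσl, mul_le_mul_of_nonneg_left h2 hσ.le,
      mul_nonneg hb₂ hK, mul_nonneg hb₂ hσl, mul_nonneg (mul_nonneg hb₁ hK) hlam0.le,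
      mul_nonneg (mul_nonneg hb₁ hσl) hlam0.le, mul_nonneg hW0 hσ.le]
  · nlinarith [mul_nonneg (by linarith : (0:ℝ) ≤ b₂ - lam*b₁) (by linarith : (0:ℝ) ≤ 3*σ/2 + c₂),
      mul_nonneg hb₁ hK, mul_nonneg hb₁ hσl, mul_le_mul_of_nonneg_left h1 hσ.le,
      mul_nonneg hb₂ hK, mul_nonneg hb₂ hσl, mul_nonneg hW0 hσ.le]

/-- Directional inequality: for hyperbolic `M ∈ SL₂(ℤ)`, with
`|y|_M = ‖y⁺‖ − ‖y⁻‖` (decomposition via the projections `p`, `m` onto the eigenspaces of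
`M*`), and any `R : ℝ² → ℝ_{≥0}` with `R(z) ≤ κ‖z‖` for `‖z‖ < ε`: there is `c_M > 0`
such that for all `0 ≤ κ < c_M` there are `c₁ > c₂ > 0` such that for all `n₁, n₂ ∈ ℤ²`
there is `y` with `‖y‖ < ε`, independent of `R`, satisfying
`−c₁(|n₁|_M − |n₂|_M) − (n₂ᵀM − n₁ᵀ)y + ‖n₂‖ R(y) ≤ −c₂(‖n₁‖ + ‖n₂‖)`. -/
theorem directional_inequality (M : Matrix (Fin 2) (Fin 2) ℤ) (hdet : M.det = 1)
    (lam μp μm : ℝ) (hlam : 1 < lam) (hμp : |μp| = lam) (hμm : |μm| = lam⁻¹)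
    (p m : (Fin 2 → ℝ) →ₗ[ℝ] (Fin 2 → ℝ))
    (hpm : ∀ y, p y + m y = y)
    (heigp : ∀ y, (M.map (Int.cast : ℤ → ℝ))ᵀ *ᵥ (p y) = μp • p y)
    (heigm : ∀ y, (M.map (Int.cast : ℤ → ℝ))ᵀ *ᵥ (m y) = μm • m y)
    (ε : ℝ) (hε : 0 < ε) :
    ∃ cM > (0 : ℝ), ∀ κ : ℝ, 0 ≤ κ → κ < cM →
      ∃ c₁ c₂ : ℝ, 0 < c₂ ∧ c₂ < c₁ ∧
        ∀ n₁ n₂ : Fin 2 → ℤ, ∃ y : Fin 2 → ℝ, e2 y < ε ∧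
          ∀ R : (Fin 2 → ℝ) → ℝ, (∀ z, 0 ≤ R z) →
            (∀ z, e2 z < ε → R z ≤ κ * e2 z) →
            -c₁ * ((e2 (p fun i => (n₁ i : ℝ)) - e2 (m fun i => (n₁ i : ℝ))) -
                (e2 (p fun i => (n₂ i : ℝ)) - e2 (m fun i => (n₂ i : ℝ)))) -
              (∑ i, ((M.map (Int.cast : ℤ → ℝ))ᵀ *ᵥ (fun i => (n₂ i : ℝ)) -
                  fun i => (n₁ i : ℝ)) i * y i) +
              e2 (fun i => (n₂ i : ℝ)) * R y ≤
            -c₂ * (e2 (fun i => (n₁ i : ℝ)) + e2 (fun i => (n₂ i : ℝ))) := by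
  have hlam0 : (0:ℝ) < lam := lt_trans one_pos hlam
  set A := (M.map (Int.cast : ℤ → ℝ))ᵀ with hA
  -- μp ≠ μm
  have hμne : μp ≠ μm := by
    intro h
    have h1 : lam⁻¹ = lam := by rw [← hμm, ← h, hμp]
    have h2 : lam * lam = 1 := by
      nth_rewrite 2 [← h1]
      exact mul_inv_cancel₀ (ne_of_gt hlam0)
    nlinarith
  -- projection identities
  have hmp : ∀ x, m (p x) = 0 := by
    intro x
    have h1 : p (p x) + m (p x) = p x := hpm (p x)
    have h2 : μp • p (p x) + μm • m (p x) = μp • p x := by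
      rw [← heigp (p x), ← heigm (p x), ← Matrix.mulVec_add, h1, heigp]
    have h3 : μp • p (p x) + μp • m (p x) = μp • p x := by
      rw [← smul_add, h1]
    have h5 : μm • m (p x) = μp • m (p x) := add_left_cancel (h2.trans h3.symm)
    have h4 : (μp - μm) • m (p x) = 0 := by rw [sub_smul, ← h5, sub_self]
    rcases smul_eq_zero.1 h4 with h5 | h5
    · exact absurd (sub_eq_zero.1 h5) hμne
    · exact h5
  have hpp : ∀ x, p (p x) = p x := by
    intro x
    have h1 : p (p x) + m (p x) = p x := hpm (p x)
    rw [hmp x, add_zero] at h1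
    exact h1
  have hpm' : ∀ x, p (m x) = 0 := by
    intro x
    have h1 : p (m x) + m (m x) = m x := hpm (m x)
    have h2 : μp • p (m x) + μm • m (m x) = μm • m x := by
      rw [← heigp (m x), ← heigm (m x), ← Matrix.mulVec_add, h1, heigm]
    have h3 : μm • p (m x) + μm • m (m x) = μm • m x := by
      rw [← smul_add, h1]
    have h5 : μp • p (m x) = μm • p (m x) := by
      have h6 := h2.trans h3.symm
      have h7 : μp • p (m x) + μm • m (m x) = μm • p (m x) + μm • m (m x) := by
        rw [h6, add_comm]
      exact add_right_cancel h7
    have h4 : (μp - μm) • p (m x) = 0 := by rw [sub_smul, h5, sub_self]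
    rcases smul_eq_zero.1 h4 with h5' | h5'
    · exact absurd (sub_eq_zero.1 h5') hμne
    · exact h5'
  have hmm' : ∀ x, m (m x) = m x := by
    intro x
    have h1 : p (m x) + m (m x) = m x := hpm (m x)
    rw [hpm' x, zero_add] at h1
    exact h1
  -- constants
  set Cp := e2 (p (Pi.single 0 1)) + e2 (p (Pi.single 1 1)) + 1 with hCp
  set Cm := e2 (m (Pi.single 0 1)) + e2 (m (Pi.single 1 1)) + 1 with hCm
  have hCp0 : 0 < Cp := by
    have := e2_nonneg (p (Pi.single 0 1)); have := e2_nonneg (p (Pi.single 1 1)); positivity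
  have hCm0 : 0 < Cm := by
    have := e2_nonneg (m (Pi.single 0 1)); have := e2_nonneg (m (Pi.single 1 1)); positivity
  set C := max Cp Cm with hC
  have hC0 : 0 < C := lt_of_lt_of_le hCp0 (le_max_left _ _)
  set δ := ε/2 with hδ
  have hδ0 : 0 < δ := by positivity
  set γ := 1/(2*C) with hγ
  have hγ0 : 0 < γ := by positivity
  set σ := δ * γ with hσdef
  have hσ : 0 < σ := mul_pos hδ0 hγ0
  clear_value Cp Cm C δ γ σ
  have hl1 : (0:ℝ) < lam - 1 := by linarith
  refine ⟨γ*(lam-1)/(4*lam), div_pos (mul_pos hγ0 hl1) (by linarith), ?_⟩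
  intro κ hκ0 hκ
  refine ⟨σ/2, σ*(lam-1)/(8*(lam+1)), div_pos (mul_pos hσ hl1) (by linarith), ?_, ?_⟩
  · rw [div_lt_div_iff₀ (by linarith) (by norm_num)]
    nlinarith [mul_pos hσ hlam0]
  intro n₁ n₂
  set n₁r : Fin 2 → ℝ := fun i => (n₁ i : ℝ) with hn₁r
  set n₂r : Fin 2 → ℝ := fun i => (n₂ i : ℝ) with hn₂r
  set v : Fin 2 → ℝ := A *ᵥ n₂r - n₁r with hv
  -- choose y
  obtain ⟨y, hyε, hysum, hyδ⟩ : ∃ y : Fin 2 → ℝ, e2 y < ε ∧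
      (∑ i, v i * y i) = δ * e2 v ∧ e2 y ≤ δ := by
    by_cases hv0 : e2 v = 0
    · refine ⟨0, by rw [e2_zero]; exact hε, ?_, by rw [e2_zero]; exact hδ0.le⟩
      simp [hv0]
    · have hv0' : 0 < e2 v := lt_of_le_of_ne (e2_nonneg v) (Ne.symm hv0)
      refine ⟨(δ / e2 v) • v, ?_, ?_, ?_⟩
      · rw [e2_smul, abs_of_pos (by positivity)]
        rw [div_mul_cancel₀ _ hv0]
        rw [hδ]; linarith
      · have : (∑ i, v i * ((δ / e2 v) • v) i) = (δ / e2 v) * ∑ i, v i ^ 2 := by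
          rw [Finset.mul_sum]
          refine Finset.sum_congr rfl fun i _ => ?_
          simp [Pi.smul_apply, smul_eq_mul]; ring
        rw [this, ← e2_sq]
        field_simp
      · rw [e2_smul, abs_of_pos (by positivity), div_mul_cancel₀ _ hv0]
  refine ⟨y, hyε, ?_⟩
  intro R hR0 hRκ
  have hRy : R y ≤ κ * δ :=
    le_trans (hRκ y hyε) (mul_le_mul_of_nonneg_left hyδ hκ0)
  -- abbreviations
  set a₁ := e2 (p n₁r) with ha₁
  set b₁ := e2 (m n₁r) with hb₁
  set a₂ := e2 (p n₂r) with ha₂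
  set b₂ := e2 (m n₂r) with hb₂
  have hN₁ : e2 n₁r ≤ a₁ + b₁ := by
    calc e2 n₁r = e2 (p n₁r + m n₁r) := by rw [hpm]
      _ ≤ a₁ + b₁ := e2_add_le _ _
  have hN₂ : e2 n₂r ≤ a₂ + b₂ := by
    calc e2 n₂r = e2 (p n₂r + m n₂r) := by rw [hpm]
      _ ≤ a₂ + b₂ := e2_add_le _ _
  -- eigen-decomposition of v
  have hAn₂ : A *ᵥ n₂r = μp • p n₂r + μm • m n₂r := by
    conv_lhs => rw [← hpm n₂r]
    rw [Matrix.mulVec_add, heigp, heigm]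
  have hpv : p v = μp • p n₂r - p n₁r := by
    rw [hv, map_sub, hAn₂, map_add, _root_.map_smul, _root_.map_smul, hpp, hpm', smul_zero,
      add_zero]
  have hmv : m v = μm • m n₂r - m n₁r := by
    rw [hv, map_sub, hAn₂, map_add, _root_.map_smul, _root_.map_smul, hmp, hmm', smul_zero,
      zero_add]
  -- reverse-triangle lower bounds
  have hWp : |lam * a₂ - a₁| ≤ e2 (p v) := by
    have h := e2_sub_abs (μp • p n₂r) (p n₁r)
    rw [e2_smul, hμp, ← hpv] at h
    exact h
  have hWm : |lam⁻¹ * b₂ - b₁| ≤ e2 (m v) := by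
    have h := e2_sub_abs (μm • m n₂r) (m n₁r)
    rw [e2_smul, hμm, ← hmv] at h
    exact h
  -- projection norm bounds
  have hpvC : e2 (p v) ≤ C * e2 v := by
    refine (e2_lin_bound p v).trans (mul_le_mul_of_nonneg_right ?_ (e2_nonneg v))
    rw [hC, ← hCp]; exact le_max_left _ _
  have hmvC : e2 (m v) ≤ C * e2 v := by
    refine (e2_lin_bound m v).trans (mul_le_mul_of_nonneg_right ?_ (e2_nonneg v))
    rw [hC, ← hCm]; exact le_max_right _ _
  have hVlow : σ * (e2 (p v) + e2 (m v)) ≤ δ * e2 v := by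
    have h1 : e2 (p v) + e2 (m v) ≤ 2*C*e2 v := by linarith
    calc σ * (e2 (p v) + e2 (m v)) ≤ σ * (2*C*e2 v) := mul_le_mul_of_nonneg_left h1 hσ.le
      _ = δ * e2 v := by rw [hσdef, hγ]; field_simp
  -- numeric lemmas
  have hc₂0 : 0 ≤ σ*(lam-1)/(8*(lam+1)) := le_of_lt (div_pos (mul_pos hσ hl1) (by linarith))
  have hc₂eq : 8*(lam+1)*(σ*(lam-1)/(8*(lam+1))) = σ*(lam-1) := by
    field_simp
  have ht0 : 0 ≤ κ*δ := mul_nonneg hκ0 hδ0.le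
  have ht4 : 4*lam*(κ*δ) ≤ σ*(lam-1) := by
    have h := (lt_div_iff₀ (by linarith : (0:ℝ) < 4*lam)).1 hκ
    have h2 := mul_le_mul_of_nonneg_right h.le hδ0.le
    rw [hσdef]
    linarith only [h2]
  have hnA := numA lam σ (κ*δ) (σ*(lam-1)/(8*(lam+1))) a₁ a₂ (e2 (p v)) hlam hσ hc₂0 hc₂eq
    ht0 ht4 (e2_nonneg _) (e2_nonneg _) hWp
  have hnB := numB lam σ (κ*δ) (σ*(lam-1)/(8*(lam+1))) b₁ b₂ (e2 (m v)) hlam hσ hc₂0 hc₂eq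
    ht0 ht4 (e2_nonneg _) (e2_nonneg _) hWm
  -- assembly
  rw [hysum]
  have hterm : e2 n₂r * R y ≤ (a₂+b₂) * (κ*δ) := by
    have h1 : e2 n₂r * R y ≤ e2 n₂r * (κ*δ) := mul_le_mul_of_nonneg_left hRy (e2_nonneg _)
    have h2 : e2 n₂r * (κ*δ) ≤ (a₂+b₂)*(κ*δ) := mul_le_mul_of_nonneg_right hN₂ ht0
    linarith
  have hc2N : (σ*(lam-1)/(8*(lam+1))) * (e2 n₁r + e2 n₂r)
      ≤ (σ*(lam-1)/(8*(lam+1))) * ((a₁+b₁) + (a₂+b₂)) :=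
    mul_le_mul_of_nonneg_left (by linarith) hc₂0
  linarith [hnA, hnB, hVlow, hterm, hc2N]
end

section
/- Let M ∈ SL₂(ℤ) be hyperbolic with fixed-point set Fix(M) ⊂ T² of cardinality N_M = |det(I−M)|. Define the linear functional B_M(ψ) = N_M⁻¹ Σ_{Mx=x} tr((I−M)⁻¹ Dψ(x)) on the Banach space ℬ_r of Z²-periodic maps ψ : T² → ℝ² extending holomorphically and boundedly to A_r (with sup norm). Then the set 𝒢 = B_M⁻¹(ℝ \ {0}) is open and dense in ℬ_r; in particular B_M is a nonzero continuous linear functional. -/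
open Matrix

def strip (r : ℝ) : Set (Fin 2 → ℂ) := {z | ∀ i, |(z i).im| < r}

/-- The real part of a complexified perturbation, as a map `ℝ² → ℝ²`. -/
noncomputable def reLift (ψ : (Fin 2 → ℂ) → (Fin 2 → ℂ)) : (Fin 2 → ℝ) → (Fin 2 → ℝ) :=
  fun x i => (ψ (fun j => (x j : ℂ)) i).re

/-- The Jacobian matrix at a point. -/
noncomputable def Jac (ψ : (Fin 2 → ℝ) → (Fin 2 → ℝ)) (x : Fin 2 → ℝ) :
    Matrix (Fin 2) (Fin 2) ℝ :=
  Matrix.of fun i j => fderiv ℝ ψ x (Pi.single j 1) i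

/-- The Banach space `ℬ_r` of `ℤ²`-periodic real-on-real perturbations extending
holomorphically and boundedly to the strip `A_r` (as a set of lifts). -/
def pertSpace (r : ℝ) : Set ((Fin 2 → ℂ) → (Fin 2 → ℂ)) :=
  {ψ | DifferentiableOn ℂ ψ (strip r) ∧
    (∃ B : ℝ, ∀ z ∈ strip r, ‖ψ z‖ ≤ B) ∧
    (∀ z : Fin 2 → ℂ, ∀ k : Fin 2 → ℤ, ψ (z + fun i => (k i : ℂ)) = ψ z) ∧
    ∀ x : Fin 2 → ℝ, ∀ i, (ψ (fun j => (x j : ℂ)) i).im = 0}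

/-- The fixed-point set of the hyperbolic toral automorphism `M` on `T²`, in the
fundamental domain `[0,1)²`. -/
def fixSet (M : Matrix (Fin 2) (Fin 2) ℤ) : Set (Fin 2 → ℝ) :=
  {x | (∀ i, x i ∈ Set.Ico (0 : ℝ) 1) ∧
    ∀ i, ∃ k : ℤ, ((M.map (Int.cast : ℤ → ℝ)) *ᵥ x) i - x i = (k : ℝ)}

/-- The linear functional `B_M(ψ) = N_M⁻¹ Σ_{Mx=x} tr((I−M)⁻¹ Dψ(x))`. -/
noncomputable def BM (M : Matrix (Fin 2) (Fin 2) ℤ) (ψ : (Fin 2 → ℂ) → (Fin 2 → ℂ)) : ℝ :=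
  ((1 - M).det.natAbs : ℝ)⁻¹ *
    ∑ᶠ x ∈ fixSet M,
      (((1 : Matrix (Fin 2) (Fin 2) ℝ) - M.map (Int.cast : ℤ → ℝ))⁻¹ * Jac (reLift ψ) x).trace

/-! ### Auxiliary material -/

section Aux

open Metric

lemma strip_isOpen (r : ℝ) : IsOpen (strip r) := by
  have h : strip r = ⋂ i : Fin 2, (fun z : Fin 2 → ℂ => (z i).im) ⁻¹' (Set.Ioo (-r) r) := by
    ext z
    simp [strip, abs_lt, Set.mem_iInter]
  rw [h]
  exact isOpen_iInter_of_finite fun i =>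
    (isOpen_Ioo.preimage (Complex.continuous_im.comp (continuous_apply i)))

lemma real_mem_strip {r : ℝ} (hr : 0 < r) (x : Fin 2 → ℝ) :
    (fun j => (x j : ℂ)) ∈ strip r := fun i => by simpa using hr

noncomputable def L1 : (Fin 2 → ℝ) →L[ℝ] (Fin 2 → ℂ) :=
  ContinuousLinearMap.pi fun i => Complex.ofRealCLM.comp (ContinuousLinearMap.proj i)

noncomputable def L2 : (Fin 2 → ℂ) →L[ℝ] (Fin 2 → ℝ) :=
  ContinuousLinearMap.pi fun i => Complex.reCLM.comp (ContinuousLinearMap.proj i)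

lemma L1_apply (x : Fin 2 → ℝ) : L1 x = fun j => (x j : ℂ) := rfl
lemma L2_apply (z : Fin 2 → ℂ) : L2 z = fun i => (z i).re := rfl

lemma reLift_eq (ψ : (Fin 2 → ℂ) → (Fin 2 → ℂ)) : reLift ψ = fun x => L2 (ψ (L1 x)) := rfl

lemma pert_diffAt {r : ℝ} (hr : 0 < r) {ψ : (Fin 2 → ℂ) → (Fin 2 → ℂ)}
    (hψ : DifferentiableOn ℂ ψ (strip r)) (x : Fin 2 → ℝ) :
    DifferentiableAt ℂ ψ (L1 x) :=
  (hψ (L1 x) (real_mem_strip hr x)).differentiableAt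
    ((strip_isOpen r).mem_nhds (real_mem_strip hr x))

lemma reLift_hasFDerivAt {r : ℝ} (hr : 0 < r) {ψ : (Fin 2 → ℂ) → (Fin 2 → ℂ)}
    (hψ : DifferentiableOn ℂ ψ (strip r)) (x : Fin 2 → ℝ) :
    HasFDerivAt (reLift ψ)
      ((L2.comp ((fderiv ℂ ψ (L1 x)).restrictScalars ℝ)).comp L1) x := by
  have hd : HasFDerivAt ψ (fderiv ℂ ψ (L1 x)) (L1 x) :=
    (pert_diffAt hr hψ x).hasFDerivAt
  have hdr : HasFDerivAt ψ ((fderiv ℂ ψ (L1 x)).restrictScalars ℝ) (L1 x) :=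
    hd.restrictScalars ℝ
  rw [reLift_eq]
  exact (L2.hasFDerivAt.comp _ (hdr.comp x (L1.hasFDerivAt)))

lemma reLift_diffAt {r : ℝ} (hr : 0 < r) {ψ : (Fin 2 → ℂ) → (Fin 2 → ℂ)}
    (hψ : DifferentiableOn ℂ ψ (strip r)) (x : Fin 2 → ℝ) :
    DifferentiableAt ℝ (reLift ψ) x :=
  (reLift_hasFDerivAt hr hψ x).differentiableAt

lemma L1_single (j : Fin 2) : L1 (Pi.single j 1) = Pi.single j (1 : ℂ) := by
  funext i
  rw [L1_apply]
  by_cases h : i = j <;> simp [h, Pi.single_apply]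

lemma fderiv_reLift_apply {r : ℝ} (hr : 0 < r) {ψ : (Fin 2 → ℂ) → (Fin 2 → ℂ)}
    (hψ : DifferentiableOn ℂ ψ (strip r)) (x : Fin 2 → ℝ) (i j : Fin 2) :
    fderiv ℝ (reLift ψ) x (Pi.single j 1) i
      = ((fderiv ℂ ψ (L1 x)) (Pi.single j (1 : ℂ)) i).re := by
  rw [(reLift_hasFDerivAt hr hψ x).fderiv]
  simp [L1_single, L2_apply]

lemma dir_deriv_bound {r δ : ℝ} (hr : 0 < r) (hδ : 0 < δ)
    {φ : (Fin 2 → ℂ) → (Fin 2 → ℂ)} (hφ : DifferentiableOn ℂ φ (strip r))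
    (hb : ∀ z ∈ strip r, ‖φ z‖ ≤ δ) (x : Fin 2 → ℝ) (j : Fin 2) :
    ‖fderiv ℂ φ (L1 x) (Pi.single j (1 : ℂ))‖ ≤ 3 * δ / r := by
  set v : Fin 2 → ℂ := Pi.single j (1 : ℂ) with hv
  set ℓ : ℂ → (Fin 2 → ℂ) := fun t => L1 x + t • v with hℓ
  have hℓ0 : ℓ 0 = L1 x := by simp [hℓ]
  have hmaps : Set.MapsTo ℓ (ball (0 : ℂ) r) (strip r) := by
    intro t ht i
    simp only [hℓ, Pi.add_apply, Pi.smul_apply, Complex.add_im, smul_eq_mul]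
    rw [L1_apply]
    simp only [Complex.ofReal_im, zero_add]
    have h1 : |(t * v i).im| ≤ ‖t‖ := by
      calc |(t * v i).im| ≤ ‖t * v i‖ := Complex.abs_im_le_norm _
        _ = ‖t‖ * ‖v i‖ := norm_mul _ _
        _ ≤ ‖t‖ * 1 := by
            apply mul_le_mul_of_nonneg_left _ (norm_nonneg t)
            by_cases h : i = j <;> simp [hv, Pi.single_apply, h]
        _ = ‖t‖ := mul_one _
    calc |(t * v i).im| ≤ ‖t‖ := h1
      _ < r := by simpa using ht
  have hℓdiff : Differentiable ℂ ℓ := by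
    apply Differentiable.const_add
    exact (differentiable_id.smul_const v)
  set g : ℂ → (Fin 2 → ℂ) := fun t => φ (ℓ t) with hg
  have hgdiff : DifferentiableOn ℂ g (ball (0 : ℂ) r) :=
    hφ.comp hℓdiff.differentiableOn hmaps
  have hgmaps : Set.MapsTo g (ball (0 : ℂ) r) (ball (g 0) (3 * δ)) := by
    intro t ht
    have h1 : ‖g t‖ ≤ δ := hb _ (hmaps ht)
    have h2 : ‖g 0‖ ≤ δ := hb _ (hmaps (mem_ball_self hr))
    rw [mem_ball, dist_eq_norm]
    calc ‖g t - g 0‖ ≤ ‖g t‖ + ‖g 0‖ := norm_sub_le _ _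
      _ ≤ δ + δ := add_le_add h1 h2
      _ < 3 * δ := by linarith
  have hschwarz : ‖deriv g 0‖ ≤ 3 * δ / r :=
    Complex.norm_deriv_le_div_of_mapsTo_ball hgdiff (hgmaps.mono_right ball_subset_closedBall) hr
  have hφAt : DifferentiableAt ℂ φ (L1 x) := pert_diffAt hr hφ x
  have hℓd : HasDerivAt ℓ v 0 := by
    have h1 : HasDerivAt (fun t : ℂ => t • v) ((1 : ℂ) • v) 0 :=
      (hasDerivAt_id (0 : ℂ)).smul_const v
    simpa [hℓ, one_smul] using h1.const_add (L1 x)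
  have hgd : HasDerivAt g (fderiv ℂ φ (L1 x) v) 0 := by
    have h2 : HasFDerivAt φ (fderiv ℂ φ (L1 x)) (ℓ 0) := by rw [hℓ0]; exact hφAt.hasFDerivAt
    have := h2.comp_hasDerivAt 0 hℓd
    exact this
  rw [← hgd.deriv]
  exact hschwarz

/-! ### The fixed point set -/

lemma zero_mem_fixSet (M : Matrix (Fin 2) (Fin 2) ℤ) : (fun _ => (0:ℝ)) ∈ fixSet M := by
  constructor
  · intro i; exact ⟨le_refl _, zero_lt_one⟩
  · intro i; exact ⟨0, by simp [mulVec]⟩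

lemma fixSet_finite (M : Matrix (Fin 2) (Fin 2) ℤ)
    (hhyp : ((1 : Matrix (Fin 2) (Fin 2) ℝ) - M.map (Int.cast : ℤ → ℝ)).det ≠ 0) :
    (fixSet M).Finite := by
  set A : Matrix (Fin 2) (Fin 2) ℝ := M.map (Int.cast : ℤ → ℝ) - 1 with hA
  have hAdet : A.det ≠ 0 := by
    have h : A = -((1 : Matrix (Fin 2) (Fin 2) ℝ) - M.map (Int.cast : ℤ → ℝ)) := (neg_sub _ _).symm
    rw [h, Matrix.det_neg]
    simpa using hhyp
  set C : ℝ := 2 + ∑ i : Fin 2, ∑ j : Fin 2, |(M i j : ℝ)| with hC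
  have hK : Set.Finite {k : Fin 2 → ℤ | ∀ i, |(k i : ℝ)| ≤ C} := by
    have hsub : {k : Fin 2 → ℤ | ∀ i, |(k i : ℝ)| ≤ C} ⊆
        Set.pi Set.univ (fun _ : Fin 2 => Set.Icc (-(⌈C⌉)) ⌈C⌉) := by
      intro k hk i _
      have h := hk i
      have h1 : (k i : ℝ) ≤ C := (abs_le.mp h).2
      have h2 : -(C) ≤ (k i : ℝ) := (abs_le.mp h).1
      constructor
      · have : (-(⌈C⌉) : ℝ) ≤ k i := by
          push_cast
          calc -((⌈C⌉:ℝ)) ≤ -C := by have := Int.le_ceil C; linarith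
            _ ≤ k i := h2
        exact_mod_cast this
      · have : (k i : ℝ) ≤ (⌈C⌉ : ℝ) := h1.trans (Int.le_ceil C)
        exact_mod_cast this
    exact Set.Finite.subset (Set.Finite.pi (fun _ => Set.finite_Icc _ _)) hsub
  apply Set.Finite.subset (hK.image (fun k => A⁻¹ *ᵥ (fun i => (k i : ℝ))))
  intro x hx
  obtain ⟨hbox, hfix⟩ := hx
  choose k hk using hfix
  refine ⟨k, ?_, ?_⟩
  · intro i
    have hkx : (k i : ℝ) = (A *ᵥ x) i := by
      rw [← hk i]
      simp [hA, Matrix.sub_mulVec, Matrix.one_mulVec]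
    rw [hkx]
    have h : (A *ᵥ x) i = ∑ j : Fin 2, A i j * x j := by simp [Matrix.mulVec, dotProduct]
    rw [h]
    calc |∑ j : Fin 2, A i j * x j| ≤ ∑ j : Fin 2, |A i j * x j| :=
          Finset.abs_sum_le_sum_abs _ _
      _ ≤ ∑ j : Fin 2, (|(M i j : ℝ)| + 1) := by
          apply Finset.sum_le_sum
          intro j _
          rw [abs_mul]
          have hxj : |x j| ≤ 1 := by
            have := hbox j
            rw [abs_le]; constructor <;> [linarith [this.1]; linarith [this.2]]
          have hAij : |A i j| ≤ |(M i j : ℝ)| + 1 := by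
            have h : A i j = (M i j : ℝ) - (1 : Matrix (Fin 2) (Fin 2) ℝ) i j := by
              simp [hA, Matrix.sub_apply, Matrix.map_apply]
            rw [h]
            calc |(M i j : ℝ) - (1 : Matrix (Fin 2) (Fin 2) ℝ) i j|
                ≤ |(M i j : ℝ)| + |(1 : Matrix (Fin 2) (Fin 2) ℝ) i j| := abs_sub _ _
              _ ≤ |(M i j : ℝ)| + 1 := by
                  gcongr
                  by_cases h : i = j <;> simp [Matrix.one_apply, h]
          calc |A i j| * |x j| ≤ (|(M i j : ℝ)| + 1) * 1 := by
                apply mul_le_mul hAij hxj (abs_nonneg _)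
                positivity
            _ = |(M i j : ℝ)| + 1 := by ring
      _ ≤ C := by
          rw [hC]
          have h : ∑ j : Fin 2, (|(M i j : ℝ)| + 1) = (∑ j : Fin 2, |(M i j : ℝ)|) + 2 := by
            simp [Finset.sum_add_distrib]
          rw [h]
          have hrow : ∑ j : Fin 2, |(M i j : ℝ)| ≤ ∑ i : Fin 2, ∑ j : Fin 2, |(M i j : ℝ)| :=
            Finset.single_le_sum (f := fun i => ∑ j : Fin 2, |(M i j : ℝ)|)
              (fun i _ => Finset.sum_nonneg fun j _ => abs_nonneg _) (Finset.mem_univ i)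
          linarith
  · have hAx : A *ᵥ x = fun i => (k i : ℝ) := by
      funext i
      rw [← hk i]
      simp [hA, Matrix.sub_mulVec, Matrix.one_mulVec]
    show A⁻¹ *ᵥ (fun i => ((k i : ℝ))) = x
    rw [← hAx, Matrix.mulVec_mulVec, Matrix.nonsing_inv_mul A (isUnit_iff_ne_zero.mpr hAdet),
      Matrix.one_mulVec]

lemma map_one_sub (M : Matrix (Fin 2) (Fin 2) ℤ) :
    ((1 - M).map (Int.cast : ℤ → ℝ)) = (1 : Matrix (Fin 2) (Fin 2) ℝ) - M.map Int.cast := by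
  ext i j
  by_cases h : i = j <;> simp [Matrix.map_apply, Matrix.sub_apply, Matrix.one_apply, h]

lemma det_cast (M : Matrix (Fin 2) (Fin 2) ℤ) :
    (((1 - M).det : ℤ) : ℝ) = ((1 : Matrix (Fin 2) (Fin 2) ℝ) - M.map Int.cast).det := by
  rw [← map_one_sub M]
  simpa using RingHom.map_det (Int.castRingHom ℝ) (1 - M)

lemma fix_N_mul_int (M : Matrix (Fin 2) (Fin 2) ℤ) {x : Fin 2 → ℝ} (hx : x ∈ fixSet M) :
    ∃ m : ℤ, (((1 - M).det.natAbs : ℕ) : ℝ) * x 0 = (m : ℝ) := by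
  obtain ⟨-, hfix⟩ := hx
  choose k hk using hfix
  set B : Matrix (Fin 2) (Fin 2) ℤ := M - 1 with hB
  have hBmap : B.map (Int.cast : ℤ → ℝ) = M.map Int.cast - 1 := by
    ext i j
    by_cases h : i = j <;> simp [hB, Matrix.map_apply, Matrix.sub_apply, Matrix.one_apply, h]
  have hAx : (B.map (Int.cast : ℤ → ℝ)) *ᵥ x = fun i => ((k i : ℤ) : ℝ) := by
    funext i
    rw [hBmap, ← hk i]
    simp [Matrix.sub_mulVec, Matrix.one_mulVec]
  have hdetc : ((B.det : ℤ) : ℝ) = (B.map (Int.cast : ℤ → ℝ)).det := by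
    simpa using RingHom.map_det (Int.castRingHom ℝ) B
  have key : ((B.det : ℤ) : ℝ) • x = (adjugate (B.map (Int.cast : ℤ → ℝ))) *ᵥ
      (fun i => ((k i : ℤ) : ℝ)) := by
    rw [← hAx, Matrix.mulVec_mulVec, Matrix.adjugate_mul, Matrix.smul_mulVec,
      Matrix.one_mulVec, hdetc]
  have hadj : adjugate (B.map (Int.cast : ℤ → ℝ)) = (adjugate B).map (Int.cast : ℤ → ℝ) := by
    simpa using (RingHom.map_adjugate (Int.castRingHom ℝ) B).symm
  set m0 : ℤ := (adjugate B *ᵥ k) 0 with hm0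
  have h0 : ((B.det : ℤ) : ℝ) * x 0 = (m0 : ℝ) := by
    have h := congrFun key 0
    simp only [Pi.smul_apply, smul_eq_mul] at h
    rw [h, hadj, hm0]
    simp only [Matrix.mulVec, dotProduct, Matrix.map_apply]
    push_cast
    rfl
  have hdet : (1 - M).det = B.det := by
    have h1 : (1 - M : Matrix (Fin 2) (Fin 2) ℤ) = -B := by rw [hB, neg_sub]
    rw [h1, Matrix.det_neg]
    simp
  rw [hdet, Nat.cast_natAbs]
  rw [Int.cast_abs]
  rcases le_or_gt 0 B.det with h | h
  · refine ⟨m0, ?_⟩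
    rw [abs_of_nonneg (by exact_mod_cast h)]
    exact h0
  · refine ⟨-m0, ?_⟩
    rw [abs_of_neg (by exact_mod_cast h)]
    rw [Int.cast_neg]
    linarith [h0]

end Aux

/-! ### The explicit perturbation `ψ₀` -/

section psi0
variable (M : Matrix (Fin 2) (Fin 2) ℤ)

lemma norm_sin_le (w : ℂ) : ‖Complex.sin w‖ ≤ Real.exp |w.im| := by
  rw [Complex.sin]
  have h1 : ‖(Complex.exp (-w * Complex.I) - Complex.exp (w * Complex.I)) * Complex.I / 2‖
      = ‖Complex.exp (-w * Complex.I) - Complex.exp (w * Complex.I)‖ / 2 := by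
    rw [norm_div, norm_mul]
    simp
  rw [h1]
  have h2 : ‖Complex.exp (-w * Complex.I)‖ = Real.exp w.im := by
    rw [Complex.norm_exp]
    congr 1
    simp
  have h3 : ‖Complex.exp (w * Complex.I)‖ = Real.exp (-w.im) := by
    rw [Complex.norm_exp]
    congr 1
    simp
  have h4 : ‖Complex.exp (-w * Complex.I) - Complex.exp (w * Complex.I)‖
      ≤ Real.exp w.im + Real.exp (-w.im) := by
    calc _ ≤ ‖Complex.exp (-w * Complex.I)‖ + ‖Complex.exp (w * Complex.I)‖ := norm_sub_le _ _
      _ = Real.exp w.im + Real.exp (-w.im) := by rw [h2, h3]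
  have h5 : Real.exp w.im ≤ Real.exp |w.im| := Real.exp_le_exp.mpr (le_abs_self _)
  have h6 : Real.exp (-w.im) ≤ Real.exp |w.im| := Real.exp_le_exp.mpr (neg_le_abs _)
  linarith

/-- integer coefficient vector: the 0-th column of `1 - M`. -/
def avec : Fin 2 → ℤ := fun i => (1 - M) i 0

/-- number of fixed points -/
def NM : ℕ := (1 - M).det.natAbs

/-- frequency -/
noncomputable def cM : ℝ := 2 * Real.pi * (NM M)

/-- the explicit perturbation with `B_M ψ₀ ≠ 0`. -/
noncomputable def psi0 : (Fin 2 → ℂ) → (Fin 2 → ℂ) :=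
  fun z i => ((avec M i : ℤ) : ℂ) * Complex.sin ((cM M : ℝ) * z 0)

lemma cM_nonneg : 0 ≤ cM M := by
  unfold cM
  positivity

lemma psi0_diff : Differentiable ℂ (psi0 M) := by
  rw [differentiable_pi]
  intro i
  apply Differentiable.mul (differentiable_const _)
  exact Complex.differentiable_sin.comp
    ((differentiable_const ((cM M : ℝ) : ℂ)).mul
      ((ContinuousLinearMap.proj (R := ℂ) (φ := fun _ : Fin 2 => ℂ) 0).differentiable))

/-- explicit bound for `ψ₀` on the strip -/
noncomputable def B0 (r : ℝ) : ℝ :=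
  (|((avec M 0 : ℤ) : ℝ)| + |((avec M 1 : ℤ) : ℝ)| + 1) * Real.exp (cM M * r)

lemma B0_pos (r : ℝ) : 0 < B0 M r := by
  unfold B0
  positivity

lemma psi0_bound (r : ℝ) : ∀ z ∈ strip r, ‖psi0 M z‖ ≤ B0 M r := by
  intro z hz
  rw [pi_norm_le_iff_of_nonneg (le_of_lt (B0_pos M r))]
  intro i
  show ‖((avec M i : ℤ) : ℂ) * Complex.sin ((cM M : ℝ) * z 0)‖ ≤ _
  rw [norm_mul]
  have h1 : ‖((avec M i : ℤ) : ℂ)‖ ≤ |((avec M 0 : ℤ) : ℝ)| + |((avec M 1 : ℤ) : ℝ)| + 1 := by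
    have h : ‖((avec M i : ℤ) : ℂ)‖ = |((avec M i : ℤ) : ℝ)| := by
      rw [← Complex.ofReal_intCast, Complex.norm_real]
      rfl
    rw [h]
    fin_cases i
    · simpa using by linarith [abs_nonneg (((avec M 1 : ℤ) : ℝ))]
    · simpa using by linarith [abs_nonneg (((avec M 0 : ℤ) : ℝ))]
  have h2 : ‖Complex.sin ((cM M : ℝ) * z 0)‖ ≤ Real.exp (cM M * r) := by
    refine (norm_sin_le _).trans (Real.exp_le_exp.mpr ?_)
    have him : (((cM M : ℝ) : ℂ) * z 0).im = cM M * (z 0).im := by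
      simp [Complex.mul_im]
    rw [him, abs_mul, abs_of_nonneg (cM_nonneg M)]
    have := hz 0
    have hc := cM_nonneg M
    nlinarith [abs_nonneg ((z 0).im)]
  exact mul_le_mul h1 h2 (norm_nonneg _) (by positivity)

lemma psi0_mem (r : ℝ) (hr : 0 < r) : psi0 M ∈ pertSpace r := by
  refine ⟨(psi0_diff M).differentiableOn, ⟨B0 M r, psi0_bound M r⟩, ?_, ?_⟩
  · intro z k
    funext i
    show ((avec M i : ℤ) : ℂ) * Complex.sin ((cM M : ℝ) * (z 0 + (k 0 : ℂ))) = _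
    congr 1
    have h : ((cM M : ℝ) : ℂ) * (z 0 + (k 0 : ℂ))
        = ((cM M : ℝ) : ℂ) * z 0 + (((NM M : ℤ) * k 0 : ℤ) : ℂ) * (2 * Real.pi) := by
      rw [cM]
      push_cast
      ring
    rw [h, Complex.sin_add_int_mul_two_pi]
  · intro x i
    show (((avec M i : ℤ) : ℂ) * Complex.sin ((cM M : ℝ) * ((x 0 : ℝ) : ℂ))).im = 0
    rw [← Complex.ofReal_mul, ← Complex.ofReal_sin]
    rw [← Complex.ofReal_intCast, ← Complex.ofReal_mul]
    exact Complex.ofReal_im _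

lemma reLift_psi0 : reLift (psi0 M) =
    fun x => Real.sin (cM M * x 0) • (fun i => ((avec M i : ℤ) : ℝ)) := by
  funext x i
  show (((avec M i : ℤ) : ℂ) * Complex.sin ((cM M : ℝ) * ((x 0 : ℝ) : ℂ))).re = _
  rw [← Complex.ofReal_mul, ← Complex.ofReal_sin, ← Complex.ofReal_intCast,
    ← Complex.ofReal_mul]
  rw [Complex.ofReal_re]
  simp [mul_comm]

lemma psi0_hasFDerivAt (x : Fin 2 → ℝ) :
    HasFDerivAt (reLift (psi0 M))
      (((Real.cos (cM M * x 0) • ((cM M) • (ContinuousLinearMap.proj 0 :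
        (Fin 2 → ℝ) →L[ℝ] ℝ))).smulRight (fun i => ((avec M i : ℤ) : ℝ)))) x := by
  rw [reLift_psi0]
  have hu : HasFDerivAt (fun x : Fin 2 → ℝ => cM M * x 0)
      ((cM M) • (ContinuousLinearMap.proj 0 : (Fin 2 → ℝ) →L[ℝ] ℝ)) x :=
    (ContinuousLinearMap.proj 0 : (Fin 2 → ℝ) →L[ℝ] ℝ).hasFDerivAt.const_mul (cM M)
  have hsin : HasFDerivAt (fun x : Fin 2 → ℝ => Real.sin (cM M * x 0))
      (Real.cos (cM M * x 0) • ((cM M) • (ContinuousLinearMap.proj 0 :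
        (Fin 2 → ℝ) →L[ℝ] ℝ))) x :=
    by have := (Real.hasDerivAt_sin (cM M * x 0)).comp_hasFDerivAt x hu; exact this
  exact hsin.smul_const _

lemma jac_psi0 (x : Fin 2 → ℝ) (i j : Fin 2) :
    Jac (reLift (psi0 M)) x i j
      = (cM M * Real.cos (cM M * x 0)) * ((avec M i : ℤ) : ℝ)
          * (if j = 0 then 1 else 0) := by
  show fderiv ℝ (reLift (psi0 M)) x (Pi.single j 1) i = _
  rw [(psi0_hasFDerivAt M x).fderiv]
  simp only [ContinuousLinearMap.smulRight_apply, ContinuousLinearMap.smul_apply,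
    ContinuousLinearMap.proj_apply, Pi.smul_apply, smul_eq_mul]
  by_cases h : j = 0
  · subst h
    rw [if_pos rfl, Pi.single_eq_same]
    ring
  · rw [Pi.single_eq_of_ne (Ne.symm h), if_neg h]
    ring

lemma avec_cast (k : Fin 2) :
    ((avec M k : ℤ) : ℝ) = ((1 : Matrix (Fin 2) (Fin 2) ℝ) - M.map (Int.cast : ℤ → ℝ)) k 0 := by
  unfold avec
  by_cases h : k = 0 <;>
    simp [Matrix.sub_apply, Matrix.one_apply, Matrix.map_apply, h]

lemma trace_psi0
    (hhyp : ((1 : Matrix (Fin 2) (Fin 2) ℝ) - M.map (Int.cast : ℤ → ℝ)).det ≠ 0)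
    (x : Fin 2 → ℝ) :
    (((1 : Matrix (Fin 2) (Fin 2) ℝ) - M.map (Int.cast : ℤ → ℝ))⁻¹
      * Jac (reLift (psi0 M)) x).trace = cM M * Real.cos (cM M * x 0) := by
  set A : Matrix (Fin 2) (Fin 2) ℝ := (1 : Matrix (Fin 2) (Fin 2) ℝ) - M.map Int.cast with hA
  have hinv : A⁻¹ * A = 1 := Matrix.nonsing_inv_mul A (isUnit_iff_ne_zero.mpr hhyp)
  have h00 : A⁻¹ 0 0 * A 0 0 + A⁻¹ 0 1 * A 1 0 = 1 := by
    have h := congrFun (congrFun hinv 0) 0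
    rw [Matrix.mul_apply, Fin.sum_univ_two] at h
    simpa [Matrix.one_apply] using h
  rw [Matrix.trace_fin_two, Matrix.mul_apply, Matrix.mul_apply, Fin.sum_univ_two,
    Fin.sum_univ_two, jac_psi0, jac_psi0, jac_psi0, jac_psi0]
  rw [avec_cast M 0, avec_cast M 1, ← hA]
  norm_num
  linear_combination (cM M * Real.cos (cM M * x 0)) * h00

end psi0

/-! ### Rewriting and linearity of `BM` -/

section BMlemmas
variable (M : Matrix (Fin 2) (Fin 2) ℤ)

lemma BM_rw (hhyp : ((1 : Matrix (Fin 2) (Fin 2) ℝ) - M.map (Int.cast : ℤ → ℝ)).det ≠ 0) (ψ : (Fin 2 → ℂ) → (Fin 2 → ℂ)) :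
    BM M ψ = ((1 - M).det.natAbs : ℝ)⁻¹ *
      ∑ x ∈ (fixSet_finite M hhyp).toFinset,
        (((1 : Matrix (Fin 2) (Fin 2) ℝ) - M.map (Int.cast : ℤ → ℝ))⁻¹
          * Jac (reLift ψ) x).trace := by
  rw [BM, finsum_mem_eq_finite_toFinset_sum _ (fixSet_finite M hhyp)]

lemma Jac_add {r : ℝ} (hr : 0 < r) {ψ₁ ψ₂ : (Fin 2 → ℂ) → (Fin 2 → ℂ)}
    (h₁ : DifferentiableOn ℂ ψ₁ (strip r)) (h₂ : DifferentiableOn ℂ ψ₂ (strip r))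
    (x : Fin 2 → ℝ) :
    Jac (reLift (ψ₁ + ψ₂)) x = Jac (reLift ψ₁) x + Jac (reLift ψ₂) x := by
  have e : reLift (ψ₁ + ψ₂) = fun y => reLift ψ₁ y + reLift ψ₂ y := by
    funext y i
    simp [reLift, Pi.add_apply, Complex.add_re]
  ext i j
  show fderiv ℝ (reLift (ψ₁ + ψ₂)) x (Pi.single j 1) i = _
  rw [e, fderiv_fun_add (reLift_diffAt hr h₁ x) (reLift_diffAt hr h₂ x)]
  simp [Jac, Matrix.add_apply]

lemma Jac_smul {r : ℝ} (hr : 0 < r) {ψ : (Fin 2 → ℂ) → (Fin 2 → ℂ)}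
    (hψ : DifferentiableOn ℂ ψ (strip r)) (t : ℝ) (x : Fin 2 → ℝ) :
    Jac (reLift (fun z => (t : ℂ) • ψ z)) x = t • Jac (reLift ψ) x := by
  have e : reLift (fun z => (t : ℂ) • ψ z) = fun y => t • reLift ψ y := by
    funext y i
    simp [reLift, Complex.mul_re]
  ext i j
  show fderiv ℝ (reLift (fun z => (t : ℂ) • ψ z)) x (Pi.single j 1) i = _
  rw [e, fderiv_fun_const_smul (reLift_diffAt hr hψ x) t]
  simp [Jac, Matrix.smul_apply]

lemma BM_add (hhyp : ((1 : Matrix (Fin 2) (Fin 2) ℝ) - M.map (Int.cast : ℤ → ℝ)).det ≠ 0)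
    {r : ℝ} (hr : 0 < r) {ψ₁ ψ₂ : (Fin 2 → ℂ) → (Fin 2 → ℂ)}
    (h₁ : DifferentiableOn ℂ ψ₁ (strip r)) (h₂ : DifferentiableOn ℂ ψ₂ (strip r)) :
    BM M (ψ₁ + ψ₂) = BM M ψ₁ + BM M ψ₂ := by
  rw [BM_rw M hhyp, BM_rw M hhyp, BM_rw M hhyp, ← mul_add, ← Finset.sum_add_distrib]
  congr 1
  apply Finset.sum_congr rfl
  intro x _
  rw [Jac_add hr h₁ h₂ x, mul_add, Matrix.trace_add]

lemma BM_smul (hhyp : ((1 : Matrix (Fin 2) (Fin 2) ℝ) - M.map (Int.cast : ℤ → ℝ)).det ≠ 0)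
    {r : ℝ} (hr : 0 < r) {ψ : (Fin 2 → ℂ) → (Fin 2 → ℂ)}
    (hψ : DifferentiableOn ℂ ψ (strip r)) (t : ℝ) :
    BM M (fun z => (t : ℂ) • ψ z) = t * BM M ψ := by
  rw [BM_rw M hhyp, BM_rw M hhyp]
  rw [Finset.sum_congr rfl (fun x _ => by
    rw [Jac_smul hr hψ t x, Matrix.mul_smul, Matrix.trace_smul, smul_eq_mul])]
  rw [← Finset.mul_sum]
  ring

lemma NM_pos (hhyp : ((1 : Matrix (Fin 2) (Fin 2) ℝ) - M.map (Int.cast : ℤ → ℝ)).det ≠ 0) :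
    0 < NM M := by
  rw [NM, Int.natAbs_pos]
  intro h
  apply hhyp
  rw [← det_cast, h, Int.cast_zero]

lemma cM_pos (hhyp : ((1 : Matrix (Fin 2) (Fin 2) ℝ) - M.map (Int.cast : ℤ → ℝ)).det ≠ 0) :
    0 < cM M := by
  rw [cM]
  have h1 := NM_pos M hhyp
  have h2 : (0:ℝ) < (NM M : ℝ) := by exact_mod_cast h1
  exact mul_pos (mul_pos two_pos Real.pi_pos) h2

lemma BM_psi0_pos
    (hhyp : ((1 : Matrix (Fin 2) (Fin 2) ℝ) - M.map (Int.cast : ℤ → ℝ)).det ≠ 0) :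
    0 < BM M (psi0 M) := by
  rw [BM_rw M hhyp]
  have hsum : ∑ x ∈ (fixSet_finite M hhyp).toFinset,
      (((1 : Matrix (Fin 2) (Fin 2) ℝ) - M.map (Int.cast : ℤ → ℝ))⁻¹
        * Jac (reLift (psi0 M)) x).trace
      = ((fixSet_finite M hhyp).toFinset.card : ℝ) * cM M := by
    rw [Finset.sum_congr rfl (fun x hx => ?_), Finset.sum_const, nsmul_eq_mul]
    rw [trace_psi0 M hhyp x]
    have hxfix : x ∈ fixSet M := by
      rwa [← Set.Finite.mem_toFinset (fixSet_finite M hhyp)]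
    obtain ⟨m, hm⟩ := fix_N_mul_int M hxfix
    have harg : cM M * x 0 = (m : ℝ) * (2 * Real.pi) := by
      rw [cM, NM] at *
      push_cast at hm ⊢
      linear_combination (2 * Real.pi) * hm
    rw [harg, Real.cos_int_mul_two_pi]
    ring
  have hcard : 0 < (fixSet_finite M hhyp).toFinset.card := by
    apply Finset.card_pos.mpr
    exact ⟨fun _ => (0:ℝ), (Set.Finite.mem_toFinset _).mpr (zero_mem_fixSet M)⟩
  have h1 : (0:ℝ) < ((fixSet_finite M hhyp).toFinset.card : ℝ) := by exact_mod_cast hcard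
  have h2 := cM_pos M hhyp
  have h3 : (0:ℝ) < ((1 - M).det.natAbs : ℝ) := by
    have := NM_pos M hhyp
    rw [NM] at this
    exact_mod_cast this
  rw [hsum]
  exact mul_pos (inv_pos.mpr h3) (mul_pos h1 h2)

lemma BM_bound_exists
    (hhyp : ((1 : Matrix (Fin 2) (Fin 2) ℝ) - M.map (Int.cast : ℤ → ℝ)).det ≠ 0)
    {r : ℝ} (hr : 0 < r) :
    ∃ K : ℝ, 0 ≤ K ∧ ∀ φ : (Fin 2 → ℂ) → (Fin 2 → ℂ),
      DifferentiableOn ℂ φ (strip r) → ∀ δ : ℝ, 0 < δ →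
        (∀ z ∈ strip r, ‖φ z‖ ≤ δ) → |BM M φ| ≤ K * δ := by
  classical
  set A : Matrix (Fin 2) (Fin 2) ℝ := (1 : Matrix (Fin 2) (Fin 2) ℝ) - M.map Int.cast with hA
  set Cst : ℝ := |A⁻¹ 0 0| + |A⁻¹ 0 1| + |A⁻¹ 1 0| + |A⁻¹ 1 1| with hCst
  have hCst0 : 0 ≤ Cst := by positivity
  set card : ℝ := ((fixSet_finite M hhyp).toFinset.card : ℝ) with hcard
  have hcard0 : (0:ℝ) ≤ card := by positivity
  refine ⟨((1 - M).det.natAbs : ℝ)⁻¹ * card * Cst * (3 / r), by positivity, ?_⟩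
  intro φ hφ δ hδ hb
  have hJ : ∀ x : Fin 2 → ℝ, ∀ k i : Fin 2, |Jac (reLift φ) x k i| ≤ 3 * δ / r := by
    intro x k i
    have h1 : Jac (reLift φ) x k i
        = ((fderiv ℂ φ (L1 x)) (Pi.single i (1 : ℂ)) k).re :=
      fderiv_reLift_apply hr hφ x k i
    rw [h1]
    calc |((fderiv ℂ φ (L1 x)) (Pi.single i (1 : ℂ)) k).re|
        ≤ ‖(fderiv ℂ φ (L1 x)) (Pi.single i (1 : ℂ)) k‖ :=
          Complex.abs_re_le_norm _
      _ = ‖(fderiv ℂ φ (L1 x)) (Pi.single i (1 : ℂ)) k‖ := rfl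
      _ ≤ ‖(fderiv ℂ φ (L1 x)) (Pi.single i (1 : ℂ))‖ := norm_le_pi_norm _ k
      _ ≤ 3 * δ / r := dir_deriv_bound hr hδ hφ hb x i
  have htr : ∀ x : Fin 2 → ℝ, |(A⁻¹ * Jac (reLift φ) x).trace| ≤ Cst * (3 * δ / r) := by
    intro x
    set J := Jac (reLift φ) x with hJdef
    have hs0 : 0 ≤ 3 * δ / r := by positivity
    have e : (A⁻¹ * J).trace
        = A⁻¹ 0 0 * J 0 0 + A⁻¹ 0 1 * J 1 0 + (A⁻¹ 1 0 * J 0 1 + A⁻¹ 1 1 * J 1 1) := by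
      rw [Matrix.trace_fin_two, Matrix.mul_apply, Matrix.mul_apply, Fin.sum_univ_two,
        Fin.sum_univ_two]
    rw [e]
    have b1 : |A⁻¹ 0 0 * J 0 0| ≤ |A⁻¹ 0 0| * (3 * δ / r) := by
      rw [abs_mul]; exact mul_le_mul_of_nonneg_left (hJ x 0 0) (abs_nonneg _)
    have b2 : |A⁻¹ 0 1 * J 1 0| ≤ |A⁻¹ 0 1| * (3 * δ / r) := by
      rw [abs_mul]; exact mul_le_mul_of_nonneg_left (hJ x 1 0) (abs_nonneg _)
    have b3 : |A⁻¹ 1 0 * J 0 1| ≤ |A⁻¹ 1 0| * (3 * δ / r) := by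
      rw [abs_mul]; exact mul_le_mul_of_nonneg_left (hJ x 0 1) (abs_nonneg _)
    have b4 : |A⁻¹ 1 1 * J 1 1| ≤ |A⁻¹ 1 1| * (3 * δ / r) := by
      rw [abs_mul]; exact mul_le_mul_of_nonneg_left (hJ x 1 1) (abs_nonneg _)
    have htri : |A⁻¹ 0 0 * J 0 0 + A⁻¹ 0 1 * J 1 0 + (A⁻¹ 1 0 * J 0 1 + A⁻¹ 1 1 * J 1 1)|
        ≤ |A⁻¹ 0 0 * J 0 0| + |A⁻¹ 0 1 * J 1 0| + (|A⁻¹ 1 0 * J 0 1| + |A⁻¹ 1 1 * J 1 1|) :=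
      (abs_add_le _ _).trans (add_le_add (abs_add_le _ _) (abs_add_le _ _))
    rw [hCst]
    linarith
  rw [BM_rw M hhyp]
  have h3 : (0:ℝ) ≤ ((1 - M).det.natAbs : ℝ)⁻¹ := by positivity
  rw [abs_mul, abs_of_nonneg h3]
  calc ((1 - M).det.natAbs : ℝ)⁻¹ * |∑ x ∈ (fixSet_finite M hhyp).toFinset,
        (A⁻¹ * Jac (reLift φ) x).trace|
      ≤ ((1 - M).det.natAbs : ℝ)⁻¹ * ∑ x ∈ (fixSet_finite M hhyp).toFinset,
          |(A⁻¹ * Jac (reLift φ) x).trace| := by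
        apply mul_le_mul_of_nonneg_left (Finset.abs_sum_le_sum_abs _ _) h3
    _ ≤ ((1 - M).det.natAbs : ℝ)⁻¹ * ∑ _x ∈ (fixSet_finite M hhyp).toFinset,
          (Cst * (3 * δ / r)) := by
        apply mul_le_mul_of_nonneg_left (Finset.sum_le_sum fun x _ => htr x) h3
    _ = ((1 - M).det.natAbs : ℝ)⁻¹ * card * Cst * (3 / r) * δ := by
        rw [Finset.sum_const, nsmul_eq_mul, ← hcard]
        field_simp

end BMlemmas

/-! ### Closure properties of `pertSpace` -/

lemma pert_add_mem {r : ℝ} {ψ₁ ψ₂ : (Fin 2 → ℂ) → (Fin 2 → ℂ)}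
    (h₁ : ψ₁ ∈ pertSpace r) (h₂ : ψ₂ ∈ pertSpace r) : ψ₁ + ψ₂ ∈ pertSpace r := by
  obtain ⟨hd₁, ⟨B₁, hB₁⟩, hp₁, hre₁⟩ := h₁
  obtain ⟨hd₂, ⟨B₂, hB₂⟩, hp₂, hre₂⟩ := h₂
  refine ⟨hd₁.add hd₂, ⟨B₁ + B₂, fun z hz => ?_⟩, fun z k => ?_, fun x i => ?_⟩
  · calc ‖ψ₁ z + ψ₂ z‖ ≤ ‖ψ₁ z‖ + ‖ψ₂ z‖ := norm_add_le _ _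
      _ ≤ B₁ + B₂ := add_le_add (hB₁ z hz) (hB₂ z hz)
  · show ψ₁ _ + ψ₂ _ = ψ₁ z + ψ₂ z
    rw [hp₁ z k, hp₂ z k]
  · show ((ψ₁ _ + ψ₂ _) i).im = 0
    rw [Pi.add_apply, Complex.add_im, hre₁ x i, hre₂ x i, add_zero]

lemma pert_smul_mem {r : ℝ} {ψ : (Fin 2 → ℂ) → (Fin 2 → ℂ)} (t : ℝ)
    (h : ψ ∈ pertSpace r) : (fun z => (t : ℂ) • ψ z) ∈ pertSpace r := by
  obtain ⟨hd, ⟨B, hB⟩, hp, hre⟩ := h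
  refine ⟨hd.fun_const_smul _, ⟨|t| * B, fun z hz => ?_⟩, fun z k => ?_, fun x i => ?_⟩
  · rw [norm_smul]
    have : ‖((t : ℝ) : ℂ)‖ = |t| := by rw [Complex.norm_real, Real.norm_eq_abs]
    rw [this]
    exact mul_le_mul_of_nonneg_left (hB z hz) (abs_nonneg t)
  · show (t : ℂ) • ψ _ = (t : ℂ) • ψ z
    rw [hp z k]
  · show (((t : ℂ) • ψ (fun j => ((x j : ℝ) : ℂ))) i).im = 0
    rw [Pi.smul_apply, smul_eq_mul, Complex.mul_im, hre x i]
    simp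

/-! ### The main theorem -/

/-- `B_M` is a nonzero continuous linear functional on `ℬ_r`, and
`𝒢 = B_M⁻¹(ℝ \ {0})` is open and dense in `ℬ_r` (with respect to the sup norm on the
strip). -/
theorem BM_generic_nonvanishing (r : ℝ) (hr : 0 < r)
    (M : Matrix (Fin 2) (Fin 2) ℤ) (hdet : M.det = 1)
    (hhyp : ((1 : Matrix (Fin 2) (Fin 2) ℝ) - M.map (Int.cast : ℤ → ℝ)).det ≠ 0) :
    -- additivity
    (∀ ψ₁ ∈ pertSpace r, ∀ ψ₂ ∈ pertSpace r, BM M (ψ₁ + ψ₂) = BM M ψ₁ + BM M ψ₂) ∧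
    -- real homogeneity
    (∀ ψ ∈ pertSpace r, ∀ t : ℝ, BM M (fun z => (t : ℂ) • ψ z) = t * BM M ψ) ∧
    -- nonzero
    (∃ ψ ∈ pertSpace r, BM M ψ ≠ 0) ∧
    -- continuity on `ℬ_r`
    (∀ ψ ∈ pertSpace r, ∀ ε > (0 : ℝ), ∃ δ > (0 : ℝ), ∀ ψ' ∈ pertSpace r,
      (∀ z ∈ strip r, ‖ψ' z - ψ z‖ < δ) → |BM M ψ' - BM M ψ| < ε) ∧
    -- `𝒢` is open
    (∀ ψ ∈ pertSpace r, BM M ψ ≠ 0 → ∃ δ > (0 : ℝ), ∀ ψ' ∈ pertSpace r,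
      (∀ z ∈ strip r, ‖ψ' z - ψ z‖ < δ) → BM M ψ' ≠ 0) ∧
    -- `𝒢` is dense
    (∀ ψ ∈ pertSpace r, ∀ ε > (0 : ℝ), ∃ ψ' ∈ pertSpace r,
      BM M ψ' ≠ 0 ∧ ∀ z ∈ strip r, ‖ψ' z - ψ z‖ < ε) := by
  -- continuity, as a reusable statement
  obtain ⟨K, hK0, hK⟩ := BM_bound_exists M hhyp hr
  have hcont : ∀ ψ ∈ pertSpace r, ∀ ε > (0 : ℝ), ∃ δ > (0 : ℝ), ∀ ψ' ∈ pertSpace r,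
      (∀ z ∈ strip r, ‖ψ' z - ψ z‖ < δ) → |BM M ψ' - BM M ψ| < ε := by
    intro ψ hψ ε hε
    refine ⟨ε / (K + 1), by positivity, ?_⟩
    intro ψ' hψ' hlt
    set φ : (Fin 2 → ℂ) → (Fin 2 → ℂ) := fun z => ψ' z - ψ z with hφdef
    have hφd : DifferentiableOn ℂ φ (strip r) := hψ'.1.sub hψ.1
    have hδpos : (0:ℝ) < ε / (K + 1) := by positivity
    have hb : ∀ z ∈ strip r, ‖φ z‖ ≤ ε / (K + 1) := fun z hz => (hlt z hz).le
    have h1 : |BM M φ| ≤ K * (ε / (K + 1)) := hK φ hφd _ hδpos hb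
    have h2 : BM M ψ' = BM M ψ + BM M φ := by
      have he : ψ + φ = ψ' := by
        funext z
        simp [hφdef]
      rw [← he]
      exact BM_add M hhyp hr hψ.1 hφd
    have h3 : K * (ε / (K + 1)) < ε := by
      rw [mul_div_assoc']
      rw [div_lt_iff₀ (by positivity)]
      nlinarith
    rw [h2]
    rw [add_sub_cancel_left]
    exact lt_of_le_of_lt h1 h3
  refine ⟨?_, ?_, ?_, hcont, ?_, ?_⟩
  · -- additivity
    intro ψ₁ h₁ ψ₂ h₂
    exact BM_add M hhyp hr h₁.1 h₂.1
  · -- homogeneity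
    intro ψ hψ t
    exact BM_smul M hhyp hr hψ.1 t
  · -- nonzero
    exact ⟨psi0 M, psi0_mem M r hr, ne_of_gt (BM_psi0_pos M hhyp)⟩
  · -- open
    intro ψ hψ hne
    obtain ⟨δ, hδ, h⟩ := hcont ψ hψ |BM M ψ| (abs_pos.mpr hne)
    refine ⟨δ, hδ, ?_⟩
    intro ψ' hψ' hlt h0
    have := h ψ' hψ' hlt
    rw [h0, zero_sub, abs_neg] at this
    exact lt_irrefl _ this
  · -- dense
    intro ψ hψ ε hε
    by_cases h0 : BM M ψ = 0
    · set s : ℝ := ε / (2 * B0 M r) with hs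
      have hB0 := B0_pos M r
      have hspos : 0 < s := by positivity
      set σ : (Fin 2 → ℂ) → (Fin 2 → ℂ) := fun z => (s : ℂ) • psi0 M z with hσ
      have hσmem : σ ∈ pertSpace r := pert_smul_mem s (psi0_mem M r hr)
      refine ⟨ψ + σ, pert_add_mem hψ hσmem, ?_, ?_⟩
      · rw [BM_add M hhyp hr hψ.1 hσmem.1, h0, zero_add, hσ,
          BM_smul M hhyp hr (psi0_mem M r hr).1 s]
        exact ne_of_gt (mul_pos hspos (BM_psi0_pos M hhyp))
      · intro z hz
        have he : (ψ + σ) z - ψ z = σ z := by simp [hσ]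
        rw [he, hσ]
        show ‖(s : ℂ) • psi0 M z‖ < ε
        rw [norm_smul, Complex.norm_real, Real.norm_eq_abs, abs_of_pos hspos]
        calc s * ‖psi0 M z‖ ≤ s * B0 M r :=
              mul_le_mul_of_nonneg_left (psi0_bound M r z hz) hspos.le
          _ = ε / 2 := by
              rw [hs]
              field_simp
          _ < ε := by linarith
    · refine ⟨ψ, hψ, h0, ?_⟩
      intro z hz
      simpa using hε
end
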